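/- Let G be a minimal counterexample to the statement 'for every f : V(G) → ℝ with f(v) ≤ 1/(d(v)+1/2) for all v and ∑_{v∈K} f(v) ≤ 1 for all cliques K, α(G) ≥ ∑_v f(v)'. Then for every vertex v of G: f(v) + ∑_{u∈N(v)} f(u) > 1. -/

import Mathlib

/-- A set of vertices is independent if its vertices are pairwise non-adjacent. -/
def SimpleGraph.IsIndepSet' {V : Type*} (G : SimpleGraph V) (s : Set V) : Prop :=
  s.Pairwise (fun u v => ¬ G.Adj u v)

open scoped Classical

theorem stmt_7 {V : Type} [Fintype V] [DecidableEq V] (G : SimpleGraph V)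
    [DecidableRel G.Adj] (f : V → ℝ)
    (hf : ∀ v, f v ≤ 1 / (G.degree v + 1 / 2))
    (hcliques : ∀ K : Finset V, G.IsClique (K : Set V) → ∑ v ∈ K, f v ≤ 1)
    (hcounter : ∀ s : Finset V, G.IsIndepSet' (s : Set V) → (s.card : ℝ) < ∑ v, f v)
    (hmin : ∀ (W : Type) [Fintype W] [DecidableEq W] (H : SimpleGraph W)
      [DecidableRel H.Adj], Fintype.card W < Fintype.card V →
      ∀ g : W → ℝ, (∀ w, g w ≤ 1 / (H.degree w + 1 / 2)) →
      (∀ K : Finset W, H.IsClique (K : Set W) → ∑ w ∈ K, g w ≤ 1) →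
      ∃ s : Finset W, H.IsIndepSet' (s : Set W) ∧ ∑ w, g w ≤ s.card) :
    ∀ v : V, 1 < f v + ∑ u ∈ G.neighborFinset v, f u := by
  intro v
  by_contra hle
  push_neg at hle
  set S : Finset V := insert v (G.neighborFinset v) with hS
  let W := {x : V // x ∈ Sᶜ}
  let H : SimpleGraph W := G.comap Subtype.val
  have hHAdj : ∀ a b : W, H.Adj a b ↔ G.Adj a.val b.val := fun a b => Iff.rfl
  haveI : DecidableRel H.Adj := fun a b => decidable_of_iff (G.Adj a.val b.val) Iff.rfl
  have hvS : v ∈ S := Finset.mem_insert_self _ _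
  have hcard : Fintype.card W < Fintype.card V := by
    have h1 : Fintype.card W = Sᶜ.card := Fintype.card_coe Sᶜ
    rw [h1, ← Finset.card_univ]
    exact Finset.card_lt_card (Finset.ssubset_univ_iff.mpr
      (fun h => (Finset.mem_compl.mp (h ▸ Finset.mem_univ v)) hvS))
  have hdeg : ∀ w : W, H.degree w ≤ G.degree w.val := by
    intro w
    rw [← SimpleGraph.card_neighborFinset_eq_degree,
      ← SimpleGraph.card_neighborFinset_eq_degree]
    apply Finset.card_le_card_of_injOn Subtype.val
    · intro u hu
      rw [Finset.mem_coe, SimpleGraph.mem_neighborFinset] at hu ⊢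
      exact hu
    · exact fun a _ b _ h => Subtype.ext h
  have hg : ∀ w : W, f w.val ≤ 1 / (H.degree w + 1 / 2) := by
    intro w
    refine le_trans (hf w.val) ?_
    apply one_div_le_one_div_of_le
    · positivity
    · have := hdeg w
      have : (H.degree w : ℝ) ≤ G.degree w.val := by exact_mod_cast this
      linarith
  have hgcliques : ∀ K : Finset W, H.IsClique (K : Set W) → ∑ w ∈ K, f w.val ≤ 1 := by
    intro K hK
    have hinj : Set.InjOn Subtype.val (K : Set W) := fun a _ b _ h => Subtype.ext h
    have : ∑ w ∈ K, f w.val = ∑ x ∈ K.image Subtype.val, f x := by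
      rw [Finset.sum_image (fun a ha b hb h => Subtype.ext h)]
    rw [this]
    apply hcliques
    intro a ha b hb hab
    simp only [Finset.coe_image, Set.mem_image, Finset.mem_coe] at ha hb
    obtain ⟨a', ha', rfl⟩ := ha
    obtain ⟨b', hb', rfl⟩ := hb
    exact hK ha' hb' (fun h => hab (by rw [h]))
  obtain ⟨s, hsind, hssum⟩ := hmin W H hcard (fun w => f w.val) hg hgcliques
  -- build independent set in G
  set t : Finset V := insert v (s.image Subtype.val) with ht
  have hvnot : v ∉ s.image Subtype.val := by
    intro h
    simp only [Finset.mem_image] at h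
    obtain ⟨w, _, hwv⟩ := h
    have := w.2
    rw [hwv] at this
    simp [hvS] at this
  have htind : G.IsIndepSet' (t : Set V) := by
    intro a ha b hb hab hadj
    simp only [ht, Finset.coe_insert, Set.mem_insert_iff, Finset.coe_image,
      Set.mem_image, Finset.mem_coe] at ha hb
    have hmemS : ∀ w : W, w.val ∉ S := fun w => Finset.mem_compl.mp w.2
    rcases ha with rfl | ⟨a', ha', rfl⟩
    · rcases hb with rfl | ⟨b', hb', rfl⟩
      · exact hab rfl
      · exact hmemS b' (Finset.mem_insert_of_mem
          ((SimpleGraph.mem_neighborFinset G a b'.val).mpr hadj))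
    · rcases hb with rfl | ⟨b', hb', rfl⟩
      · exact hmemS a' (Finset.mem_insert_of_mem
          ((SimpleGraph.mem_neighborFinset G b a'.val).mpr hadj.symm))
      · exact hsind ha' hb' (fun h => hab (by rw [h])) hadj
  have hcount := hcounter t htind
  have htcard : t.card = s.card + 1 := by
    rw [ht, Finset.card_insert_of_notMem hvnot, Finset.card_image_of_injective _ Subtype.val_injective]
  have hsplit : ∑ x, f x = f v + ∑ u ∈ G.neighborFinset v, f u + ∑ w : W, f w.val := by
    have h1 : ∑ x ∈ Sᶜ, f x = ∑ w : W, f w.val :=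
      Finset.sum_subtype Sᶜ (fun x => Iff.rfl) f
    have h2 : ∑ x ∈ S, f x = f v + ∑ u ∈ G.neighborFinset v, f u := by
      rw [hS, Finset.sum_insert (by simp)]
    rw [← Finset.sum_add_sum_compl S f, h1, h2]
  rw [hsplit, htcard] at hcount
  push_cast at hcount
  linarith
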